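/- arXiv:2308.07064 — 7 statements merged into one kernel-verified Lean document; each statement's English description precedes it below -/
import Mathlib

section
/- Let ⫫ satisfy finite character (if a ⫫_C B for all finite a ⊆ A then A ⫫_C B), base monotonicity, and weak locality (for every finite a and every B there exists a finite b ⊆ B with a ⫫_b B). Then ⫫ satisfies local character: for every A there is a cardinal κ(A) such that for every B there is B₀ ⊆ B with |B₀| < κ(A) and A ⫫_{B₀} B. -/
universe u

/-- finite character + base monotonicity + weak locality imply local
character: for every `A` there is a cardinal `κ` such that for all `B` there is
`B₀ ⊆ B` with `|B₀| < κ` and `A ⫫_{B₀} B`. -/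
theorem stmt3 {S : Type u} (ind : Set S → Set S → Set S → Prop)
    (hfin : ∀ A C B : Set S, (∀ a : Set S, a ⊆ A → a.Finite → ind a C B) → ind A C B)
    (hbmon : ∀ A C B D : Set S, C ⊆ B → B ⊆ D → ind A C D → ind A B D)
    (hwloc : ∀ a : Set S, a.Finite → ∀ B : Set S, ∃ b : Set S, b ⊆ B ∧ b.Finite ∧ ind a b B) :
    ∀ A : Set S, ∃ κ : Cardinal.{u}, ∀ B : Set S,
      ∃ B₀ : Set S, B₀ ⊆ B ∧ Cardinal.mk B₀ < κ ∧ ind A B₀ B := by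
  intro A
  refine ⟨(Cardinal.mk {a : Set S // a ⊆ A ∧ a.Finite} * Cardinal.aleph0 |> Order.succ), fun B => ?_⟩
  have hch : ∀ i : {a : Set S // a ⊆ A ∧ a.Finite},
      ∃ b : Set S, b ⊆ B ∧ b.Finite ∧ ind i.1 b B := fun i => hwloc i.1 i.2.2 B
  choose b hbB hbfin hbind using hch
  refine ⟨⋃ i, b i, Set.iUnion_subset hbB, ?_, ?_⟩
  · refine lt_of_le_of_lt ?_ (Order.lt_succ _)
    calc Cardinal.mk (⋃ i, b i : Set S)
        ≤ Cardinal.mk {a : Set S // a ⊆ A ∧ a.Finite} * ⨆ i, Cardinal.mk (b i) :=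
          Cardinal.mk_iUnion_le _
      _ ≤ Cardinal.mk {a : Set S // a ⊆ A ∧ a.Finite} * Cardinal.aleph0 := by
          gcongr
          exact ciSup_le' fun i => ((hbfin i).lt_aleph0).le
  · refine hfin A _ B fun a haA hafin => ?_
    exact hbmon a (b ⟨a, haA, hafin⟩) (⋃ i, b i) B
      (Set.subset_iUnion b ⟨a, haA, hafin⟩) (Set.iUnion_subset hbB)
      (hbind ⟨a, haA, hafin⟩)
end

section
/- Let (S, cl) be a pregeometry. If a is a single element with a ∉ cl(B), then for every C ⊆ B we have cl({a} ∪ C) ∩ cl(B ∪ C) = cl(C) (i.e., a ⫫ᵃ_C B). -/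
/-- in a pregeometry, if a singleton `a` satisfies `a ∉ cl B`, then
for every `C ⊆ B` we have `cl({a} ∪ C) ∩ cl(B ∪ C) = cl C`, i.e. `a ⫫ᵃ_C B`. -/
theorem stmt5 {S : Type*} (cl : Set S → Set S)
    (hsub : ∀ A : Set S, A ⊆ cl A)
    (hmono : ∀ A B : Set S, A ⊆ B → cl A ⊆ cl B)
    (hidem : ∀ A : Set S, cl (cl A) = cl A)
    (hfin : ∀ (A : Set S) (x : S), x ∈ cl A → ∃ F : Finset S, ↑F ⊆ A ∧ x ∈ cl ↑F)
    (hexch : ∀ (A : Set S) (a b : S), a ∈ cl (A ∪ {b}) → a ∉ cl A → b ∈ cl (A ∪ {a}))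
    (a : S) (B : Set S) (ha : a ∉ cl B) :
    ∀ C : Set S, C ⊆ B → cl ({a} ∪ C) ∩ cl (B ∪ C) = cl C := by
  intro C hCB
  have hBC : B ∪ C = B := Set.union_eq_self_of_subset_right hCB
  rw [hBC]
  apply Set.Subset.antisymm
  · rintro x ⟨hx1, hx2⟩
    by_contra hxC
    have hx1' : x ∈ cl (C ∪ {a}) := by rwa [Set.union_comm] at hx1
    have haCx : a ∈ cl (C ∪ {x}) := hexch C x a hx1' hxC
    have hsubB : C ∪ {x} ⊆ cl B := by
      rintro y (hy | hy)
      · exact hsub B (hCB hy)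
      · rcases hy with rfl; exact hx2
    have hcl : cl (C ∪ {x}) ⊆ cl B := by
      have h := hmono _ _ hsubB
      rwa [hidem] at h
    exact ha (hcl haCx)
  · intro x hx
    exact ⟨hmono C ({a} ∪ C) Set.subset_union_right hx, hmono C B hCB hx⟩
end

section
/- Let (S, cl) be a pregeometry and A, B ⊆ S be cl-closed sets. Then dim(A ∪ B) + dim(A ∩ B) ≤ dim(A) + dim(B) (submodularity of dimension). -/
open Cardinal

section Pregeom

variable {S : Type*} {cl : Set S → Set S}

/-- Independence (over the empty set). -/
def Indep (cl : Set S → Set S) (X : Set S) : Prop := ∀ a ∈ X, a ∉ cl (X \ {a})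

lemma indep_mono (hmono : ∀ A B : Set S, A ⊆ B → cl A ⊆ cl B)
    {X Y : Set S} (hX : Indep cl X) (hYX : Y ⊆ X) : Indep cl Y := by
  intro a ha hacl
  exact hX a (hYX ha) (hmono _ _ (Set.diff_subset_diff_left hYX) hacl)

lemma cl_le_of_subset_cl (hmono : ∀ A B : Set S, A ⊆ B → cl A ⊆ cl B)
    (hidem : ∀ A : Set S, cl (cl A) = cl A)
    {F G : Set S} (h : F ⊆ cl G) : cl F ⊆ cl G := by
  have := hmono _ _ h
  rwa [hidem] at this

/-- Finite Steinitz exchange: a finite independent set spanned by `F` has at most `F.card`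
elements. Induction on `(X \ F).card`. -/
lemma steinitz (hsub : ∀ A : Set S, A ⊆ cl A)
    (hmono : ∀ A B : Set S, A ⊆ B → cl A ⊆ cl B)
    (hidem : ∀ A : Set S, cl (cl A) = cl A)
    (hexch : ∀ (A : Set S) (a b : S), a ∈ cl (A ∪ {b}) → a ∉ cl A → b ∈ cl (A ∪ {a}))
    [DecidableEq S] :
    ∀ (n : ℕ) (F X : Finset S), (X \ F).card = n → Indep cl ↑X → ↑X ⊆ cl ↑F →
      X.card ≤ F.card := by
  intro n
  induction n using Nat.strong_induction_on with
  | _ n IH =>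
    intro F X hn hind hspan
    classical
    rcases eq_or_ne n 0 with h0 | h0
    · -- X ⊆ F
      subst h0
      have : X ⊆ F := by
        intro x hx
        by_contra hxF
        have : x ∈ X \ F := Finset.mem_sdiff.2 ⟨hx, hxF⟩
        simpa [Finset.card_eq_zero.1 hn] using this
      exact Finset.card_le_card this
    · -- pick x ∈ X \ F
      obtain ⟨x, hxXF⟩ := Finset.card_pos.1 (by omega : 0 < (X \ F).card)
      obtain ⟨hxX, hxF⟩ := Finset.mem_sdiff.1 hxXF
      -- minimal F' ⊆ F with x ∈ cl F'
      have hT : (F.powerset.filter (fun F' : Finset S => x ∈ cl (↑F' : Set S))).Nonempty :=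
        ⟨F, Finset.mem_filter.2 ⟨Finset.mem_powerset_self F, hspan (by exact_mod_cast hxX)⟩⟩
      obtain ⟨F', hF'mem, hF'min⟩ :=
        Finset.exists_min_image _ Finset.card hT
      simp only [Finset.mem_filter, Finset.mem_powerset] at hF'mem
      obtain ⟨hF'F, hxclF'⟩ := hF'mem
      -- there is f ∈ F' with f ∉ X
      have hxind : x ∉ cl ((↑X : Set S) \ {x}) := hind x hxX
      have : ¬ (↑F' : Set S) ⊆ (↑X : Set S) \ {x} := by
        intro hsubXF'
        exact hxind (hmono _ _ hsubXF' hxclF')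
      obtain ⟨f, hfF', hfbad⟩ : ∃ f ∈ F', (f : S) ∉ (↑X : Set S) \ {x} := by
        by_contra h
        push_neg at h
        exact this (fun y hy => h y (by exact_mod_cast hy))
      have hfx : f ≠ x := fun h => hxF (hF'F (h ▸ hfF'))
      have hfX : f ∉ X := by
        intro hfX
        exact hfbad ⟨by exact_mod_cast hfX, by simpa using hfx⟩
      -- minimality gives x ∉ cl (F'.erase f)
      have hxnotcl : x ∉ cl ↑(F'.erase f) := by
        intro hx
        have hmem : F'.erase f ∈ F.powerset.filter (fun F'' : Finset S => x ∈ cl (↑F'' : Set S)) := by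
          simp only [Finset.mem_filter, Finset.mem_powerset]
          exact ⟨(Finset.erase_subset f F').trans hF'F, hx⟩
        have := hF'min _ hmem
        have hcard : (F'.erase f).card < F'.card := Finset.card_erase_lt_of_mem hfF'
        omega
      -- exchange: f ∈ cl ((F'.erase f) ∪ {x})
      have hxcl' : x ∈ cl (↑(F'.erase f) ∪ {f}) := by
        have hueq : (↑(F'.erase f) : Set S) ∪ {f} = ↑F' := by
          ext y
          simp only [Set.mem_union, Finset.coe_erase, Set.mem_diff,
            Set.mem_singleton_iff, Finset.mem_coe]
          constructor
          · rintro (⟨h, -⟩ | rfl)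
            · exact h
            · exact hfF'
          · intro h
            rcases eq_or_ne y f with rfl | hne
            · exact Or.inr rfl
            · exact Or.inl ⟨h, hne⟩
        rwa [hueq]
      have hfcl : f ∈ cl (↑(F'.erase f) ∪ {x}) := hexch _ x f hxcl' hxnotcl
      -- new spanning set G
      set G : Finset S := insert x (F.erase f) with hG
      have hGcard : G.card ≤ F.card := by
        have h1 : G.card ≤ (F.erase f).card + 1 := Finset.card_insert_le x (F.erase f)
        have h2 : (F.erase f).card = F.card - 1 := Finset.card_erase_of_mem (hF'F hfF')
        have h3 : 0 < F.card := Finset.card_pos.2 ⟨f, hF'F hfF'⟩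
        omega
      have hGcoe : (↑G : Set S) = (↑(F.erase f) : Set S) ∪ {x} := by
        rw [hG]
        ext y
        simp [or_comm]
      have hfclG : f ∈ cl ↑G := by
        rw [hGcoe]
        refine hmono _ _ (Set.union_subset_union_left _ ?_) hfcl
        intro y hy
        have hy' := Finset.mem_erase.1 (by exact_mod_cast hy : y ∈ F'.erase f)
        exact_mod_cast Finset.mem_erase.2 ⟨hy'.1, hF'F hy'.2⟩
      have hFclG : (↑F : Set S) ⊆ cl ↑G := by
        intro y hy
        rcases eq_or_ne y f with rfl | hne
        · exact hfclG
        · apply hsub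
          rw [hGcoe]
          exact Or.inl (by exact_mod_cast Finset.mem_erase.2 ⟨hne, by exact_mod_cast hy⟩)
      have hspanG : (↑X : Set S) ⊆ cl ↑G :=
        hspan.trans (cl_le_of_subset_cl hmono hidem hFclG)
      -- (X \ G).card < n
      have hlt : (X \ G).card < n := by
        have hsub2 : X \ G ⊆ (X \ F).erase x := by
          intro y hy
          obtain ⟨hyX, hyG⟩ := Finset.mem_sdiff.1 hy
          refine Finset.mem_erase.2 ⟨?_, Finset.mem_sdiff.2 ⟨hyX, ?_⟩⟩
          · rintro rfl; exact hyG (Finset.mem_insert_self _ _)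
          · intro hyF
            rcases eq_or_ne y f with rfl | hne
            · exact hfX hyX
            · exact hyG (Finset.mem_insert_of_mem (Finset.mem_erase.2 ⟨hne, hyF⟩))
        calc (X \ G).card ≤ ((X \ F).erase x).card := Finset.card_le_card hsub2
          _ < (X \ F).card := Finset.card_erase_lt_of_mem hxXF
          _ = n := hn
      exact (IH _ hlt G X rfl hind hspanG).trans hGcard

/-- An independent set spanned by a finite set is finite of cardinality at most `F.card`. -/
lemma mk_le_of_span_finset (hsub : ∀ A : Set S, A ⊆ cl A)
    (hmono : ∀ A B : Set S, A ⊆ B → cl A ⊆ cl B)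
    (hidem : ∀ A : Set S, cl (cl A) = cl A)
    (hexch : ∀ (A : Set S) (a b : S), a ∈ cl (A ∪ {b}) → a ∉ cl A → b ∈ cl (A ∪ {a}))
    {X : Set S} {F : Finset S} (hind : Indep cl X) (hspan : X ⊆ cl ↑F) :
    Cardinal.mk X ≤ (F.card : Cardinal) := by
  classical
  have key : ∀ X₀ : Finset S, ↑X₀ ⊆ X → X₀.card ≤ F.card := by
    intro X₀ hX₀
    exact steinitz hsub hmono hidem hexch _ F X₀ rfl
      (indep_mono hmono hind hX₀) (hX₀.trans hspan)
  have hXfin : X.Finite := by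
    by_contra hinf
    obtain ⟨t, hts, htc⟩ := Set.Infinite.exists_subset_card_eq hinf (F.card + 1)
    have := key t hts
    omega
  obtain ⟨XF, rfl⟩ := hXfin.exists_finset_coe
  have : Cardinal.mk (↑XF : Set S) = (XF.card : Cardinal) := by
    simp [Cardinal.mk_coe_finset]
  rw [this]
  exact_mod_cast key XF subset_rfl

/-- Main cardinality lemma: an independent set spanned by `Z` has `#X ≤ #Z`. -/
lemma mk_le_of_span (hsub : ∀ A : Set S, A ⊆ cl A)
    (hmono : ∀ A B : Set S, A ⊆ B → cl A ⊆ cl B)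
    (hidem : ∀ A : Set S, cl (cl A) = cl A)
    (hfin : ∀ (A : Set S) (x : S), x ∈ cl A → ∃ F : Finset S, ↑F ⊆ A ∧ x ∈ cl ↑F)
    (hexch : ∀ (A : Set S) (a b : S), a ∈ cl (A ∪ {b}) → a ∉ cl A → b ∈ cl (A ∪ {a}))
    {X Z : Set S} (hind : Indep cl X) (hspan : X ⊆ cl Z) :
    Cardinal.mk X ≤ Cardinal.mk Z := by
  rcases Z.finite_or_infinite with hZ | hZ
  · obtain ⟨ZF, rfl⟩ := hZ.exists_finset_coe
    have h1 : Cardinal.mk X ≤ (ZF.card : Cardinal) :=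
      mk_le_of_span_finset hsub hmono hidem hexch hind hspan
    simpa [Cardinal.mk_coe_finset] using h1
  · haveI : Infinite Z := hZ.to_subtype
    -- choose finite supports
    have hch : ∀ x : X, ∃ F : Finset S, ↑F ⊆ Z ∧ (x : S) ∈ cl ↑F :=
      fun x => hfin Z x (hspan x.2)
    choose f hf1 hf2 using hch
    let T := {F : Finset S // ↑F ⊆ Z}
    let g : X → T := fun x => ⟨f x, hf1 x⟩
    -- each fiber is finite
    have hfib : ∀ F : T, Cardinal.mk {x : X // g x = F} ≤ Cardinal.aleph0 := by
      intro F
      have hfibfin : Finite {x : X // g x = F} := by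
        let X₀ : Set S := X ∩ cl ↑(F : Finset S)
        have hX₀fin : X₀.Finite := by
          have := mk_le_of_span_finset hsub hmono hidem hexch
            (indep_mono hmono hind Set.inter_subset_left)
            (Set.inter_subset_right : X₀ ⊆ cl ↑(F : Finset S))
          have hlt : Cardinal.mk X₀ < Cardinal.aleph0 :=
            lt_of_le_of_lt this (Cardinal.nat_lt_aleph0 _)
          exact (Cardinal.lt_aleph0_iff_set_finite.1 hlt)
        haveI := hX₀fin.to_subtype
        refine Finite.of_injective
          (fun x => (⟨(x : X), (x.1).2, ?_⟩ : X₀)) ?_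
        · have : g x.1 = F := x.2
          have := hf2 x.1
          rw [show f x.1 = (F : Finset S) from congrArg Subtype.val x.2] at this
          exact this
        · intro a b hab
          have h1 : ((a.1 : S)) = (b.1 : S) :=
            congrArg (fun t : X₀ => (t : S)) hab
          exact Subtype.ext (Subtype.ext h1)
      exact Cardinal.mk_le_aleph0
    -- #X ≤ #T * ℵ₀
    have h1 : Cardinal.mk X ≤ Cardinal.mk T * Cardinal.aleph0 := by
      have := (Cardinal.mk_congr (Equiv.sigmaFiberEquiv g)).symm
      rw [this, Cardinal.mk_sigma]
      calc (Cardinal.sum fun F => Cardinal.mk {x : X // g x = F})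
          ≤ Cardinal.sum fun _ : T => Cardinal.aleph0 := Cardinal.sum_le_sum _ _ hfib
        _ = Cardinal.mk T * Cardinal.aleph0 := Cardinal.sum_const' _ _
    -- #T ≤ #Z
    have h2 : Cardinal.mk T ≤ Cardinal.mk Z := by
      rw [← Cardinal.mk_finset_of_infinite ↥Z]
      let emb : T → Finset ↥Z := fun F =>
        (F : Finset S).preimage (fun z : ↥Z => (z : S)) (Subtype.coe_injective.injOn)
      have hembinj : Function.Injective emb := by
        intro F₁ F₂ h
        apply Subtype.ext
        ext y
        constructor
        · intro hy
          have hmem : (⟨y, F₁.2 (by exact_mod_cast hy)⟩ : ↥Z) ∈ emb F₁ :=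
            Finset.mem_preimage.2 hy
          rw [h] at hmem
          exact Finset.mem_preimage.1 hmem
        · intro hy
          have hmem : (⟨y, F₂.2 (by exact_mod_cast hy)⟩ : ↥Z) ∈ emb F₂ :=
            Finset.mem_preimage.2 hy
          rw [← h] at hmem
          exact Finset.mem_preimage.1 hmem
      exact Cardinal.mk_le_of_injective hembinj
    calc Cardinal.mk X ≤ Cardinal.mk T * Cardinal.aleph0 := h1
      _ ≤ Cardinal.mk Z * Cardinal.aleph0 := by
          exact mul_le_mul_left h2 _
      _ = Cardinal.mk Z := Cardinal.mul_aleph0_eq (Cardinal.aleph0_le_mk Z)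

/-- Extension: any independent set `Y` extends inside a set `Z` to an independent set
spanning `Z`. -/
lemma exists_extension (hsub : ∀ A : Set S, A ⊆ cl A)
    (hmono : ∀ A B : Set S, A ⊆ B → cl A ⊆ cl B)
    (hfin : ∀ (A : Set S) (x : S), x ∈ cl A → ∃ F : Finset S, ↑F ⊆ A ∧ x ∈ cl ↑F)
    (hexch : ∀ (A : Set S) (a b : S), a ∈ cl (A ∪ {b}) → a ∉ cl A → b ∈ cl (A ∪ {a}))
    {Y : Set S} (Z : Set S) (hY : Indep cl Y) :
    ∃ C : Set S, C ⊆ Z ∧ Disjoint Y C ∧ Indep cl (Y ∪ C) ∧ Z ⊆ cl (Y ∪ C) := by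
  classical
  set P : Set (Set S) := {C | C ⊆ Z \ Y ∧ Indep cl (Y ∪ C)} with hP
  have hzorn : ∃ m, Maximal (· ∈ P) m := by
    apply zorn_subset
    intro c hc hchain
    rcases c.eq_empty_or_nonempty with rfl | hcne
    · exact ⟨∅, ⟨by simp, by simpa using hY⟩, by simp⟩
    · refine ⟨⋃₀ c, ⟨?_, ?_⟩, fun s hs => Set.subset_sUnion_of_mem hs⟩
      · exact Set.sUnion_subset fun s hs => (hc hs).1
      · intro a ha hacl
        obtain ⟨G, hGsub, haG⟩ := hfin _ a hacl
        -- G's c-part lies in some single member of the chain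
        have key : ∀ G : Finset S, ↑G ⊆ (Y ∪ ⋃₀ c) \ {a} →
            ∃ C₀ ∈ c, ↑G ⊆ (Y ∪ C₀) \ {a} := by
          intro G
          induction G using Finset.induction_on with
          | empty => intro _; exact ⟨hcne.choose, hcne.choose_spec, by simp⟩
          | @insert x s hxs ih =>
            intro hins
            obtain ⟨C₀, hC₀c, hsC₀⟩ := ih (by
              refine Set.Subset.trans ?_ hins
              exact_mod_cast Finset.coe_subset.2 (Finset.subset_insert _ _))
            have hxmem : x ∈ (Y ∪ ⋃₀ c) \ {a} := hins (by exact_mod_cast Finset.mem_insert_self x s)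
            obtain ⟨hxYc, hxa⟩ := hxmem
            rcases hxYc with hxY | hxc
            · exact ⟨C₀, hC₀c, by
                intro y hy
                rcases Finset.mem_insert.1 (by exact_mod_cast hy) with rfl | hy'
                · exact ⟨Or.inl hxY, hxa⟩
                · exact hsC₀ (by exact_mod_cast hy')⟩
            · obtain ⟨C₁, hC₁c, hxC₁⟩ := hxc
              rcases hchain.total hC₀c hC₁c with hle | hle
              · exact ⟨C₁, hC₁c, by
                  intro y hy
                  rcases Finset.mem_insert.1 (by exact_mod_cast hy) with rfl | hy'
                  · exact ⟨Or.inr hxC₁, hxa⟩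
                  · obtain ⟨h1, h2⟩ := hsC₀ (by exact_mod_cast hy')
                    exact ⟨h1.imp id (fun h => hle h), h2⟩⟩
              · exact ⟨C₀, hC₀c, by
                  intro y hy
                  rcases Finset.mem_insert.1 (by exact_mod_cast hy) with rfl | hy'
                  · exact ⟨Or.inr (hle hxC₁), hxa⟩
                  · exact hsC₀ (by exact_mod_cast hy')⟩
        obtain ⟨C₀, hC₀c, hGC₀⟩ := key G (hGsub.trans (by
          apply Set.diff_subset_diff_left
          rfl))
        -- also a itself is in Y ∪ some member
        have haYc : a ∈ Y ∪ ⋃₀ c := ha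
        have : ∃ C₂ ∈ c, a ∈ Y ∪ C₂ ∧ ↑G ⊆ (Y ∪ C₂) \ {a} := by
          rcases haYc with haY | hac
          · exact ⟨C₀, hC₀c, Or.inl haY, hGC₀⟩
          · obtain ⟨C₁, hC₁c, haC₁⟩ := hac
            rcases hchain.total hC₀c hC₁c with hle | hle
            · refine ⟨C₁, hC₁c, Or.inr haC₁, ?_⟩
              intro y hy
              obtain ⟨h1, h2⟩ := hGC₀ hy
              exact ⟨h1.imp id (fun h => hle h), h2⟩
            · exact ⟨C₀, hC₀c, Or.inr (hle haC₁), hGC₀⟩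
        obtain ⟨C₂, hC₂c, haC₂, hGC₂⟩ := this
        exact (hc hC₂c).2 a haC₂ (hmono _ _ hGC₂ haG)
  obtain ⟨C, hCmax⟩ := hzorn
  obtain ⟨⟨hCZ, hCind⟩, hmax⟩ := hCmax
  refine ⟨C, fun x hx => ((hCZ hx).1), ?_, hCind, ?_⟩
  · exact Set.disjoint_left.2 fun x hxY hxC => (hCZ hxC).2 hxY
  · -- maximality gives spanning
    intro z hz
    by_contra hzcl
    have hzY : z ∉ Y := fun h => hzcl (hsub _ (Or.inl h))
    have hzC : z ∉ C := fun h => hzcl (hsub _ (Or.inr h))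
    have hznew : Indep cl (Y ∪ insert z C) := by
      intro a ha hacl
      rcases eq_or_ne a z with heqaz | haz
      · rw [heqaz] at hacl
        have hsubset : (Y ∪ insert z C) \ {z} ⊆ Y ∪ C := by
          rintro y ⟨hy1, hy2⟩
          rcases hy1 with h | h
          · exact Or.inl h
          · rcases Set.mem_insert_iff.1 h with rfl | h
            · exact absurd rfl hy2
            · exact Or.inr h
        exact hzcl (hmono _ _ hsubset hacl)
      · have haYC : a ∈ Y ∪ C := by
          rcases ha with h | h
          · exact Or.inl h
          · rcases Set.mem_insert_iff.1 h with rfl | h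
            · exact absurd rfl haz
            · exact Or.inr h
        have heq : (Y ∪ insert z C) \ {a} = ((Y ∪ C) \ {a}) ∪ {z} := by
          ext y
          simp only [Set.mem_diff, Set.mem_union, Set.mem_insert_iff,
            Set.mem_singleton_iff]
          constructor
          · rintro ⟨h1 | (rfl | h1), h2⟩
            · exact Or.inl ⟨Or.inl h1, h2⟩
            · exact Or.inr rfl
            · exact Or.inl ⟨Or.inr h1, h2⟩
          · rintro (⟨h1, h2⟩ | rfl)
            · exact ⟨h1.imp id (fun h => Or.inr h), h2⟩
            · exact ⟨Or.inr (Or.inl rfl), Ne.symm haz⟩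
        rw [heq] at hacl
        by_cases hacl0 : a ∈ cl ((Y ∪ C) \ {a})
        · exact hCind a haYC hacl0
        · have hz2 := hexch _ a z hacl hacl0
          have heq2 : ((Y ∪ C) \ {a}) ∪ {a} = Y ∪ C := by
            ext y
            simp only [Set.mem_union, Set.mem_diff, Set.mem_singleton_iff]
            constructor
            · rintro (⟨h, -⟩ | rfl)
              · exact h
              · exact haYC
            · intro h
              rcases eq_or_ne y a with rfl | hne
              · exact Or.inr rfl
              · exact Or.inl ⟨h, hne⟩
          rw [heq2] at hz2
          exact hzcl hz2
    have : insert z C ∈ P := ⟨Set.insert_subset ⟨hz, hzY⟩ hCZ, hznew⟩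
    have := hmax this (Set.subset_insert z C)
    exact hzC (this (Set.mem_insert z C))

end Pregeom

/-- `X` is independent over `B` with respect to `cl`. -/
def IndepOver {S : Type*} (cl : Set S → Set S) (B X : Set S) : Prop :=
  ∀ a ∈ X, a ∉ cl (B ∪ (X \ {a}))

/-- `X` is a basis of `A` over `B`. -/
def IsBasisOver {S : Type*} (cl : Set S → Set S) (A B X : Set S) : Prop :=
  X ⊆ cl (A ∪ B) ∧ IndepOver cl B X ∧ A ⊆ cl (X ∪ B)

/-- in a pregeometry, for cl-closed sets `A`, `B`,
`dim(A ∪ B) + dim(A ∩ B) ≤ dim A + dim B` (submodularity). -/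
theorem stmt10 {S : Type*} (cl : Set S → Set S)
    (hsub : ∀ A : Set S, A ⊆ cl A)
    (hmono : ∀ A B : Set S, A ⊆ B → cl A ⊆ cl B)
    (hidem : ∀ A : Set S, cl (cl A) = cl A)
    (hfin : ∀ (A : Set S) (x : S), x ∈ cl A → ∃ F : Finset S, ↑F ⊆ A ∧ x ∈ cl ↑F)
    (hexch : ∀ (A : Set S) (a b : S), a ∈ cl (A ∪ {b}) → a ∉ cl A → b ∈ cl (A ∪ {a}))
    (A B : Set S) (hA : cl A = A) (hB : cl B = B)
    (X Y ZA ZB : Set S)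
    (hX : IsBasisOver cl (A ∪ B) ∅ X) (hY : IsBasisOver cl (A ∩ B) ∅ Y)
    (hZA : IsBasisOver cl A ∅ ZA) (hZB : IsBasisOver cl B ∅ ZB) :
    Cardinal.mk X + Cardinal.mk Y ≤ Cardinal.mk ZA + Cardinal.mk ZB := by
  -- unpack hypotheses, removing the `∪ ∅`
  have hXind : Indep cl X := by
    intro a ha h
    exact hX.2.1 a ha (by simpa using h)
  have hYind : Indep cl Y := by
    intro a ha h
    exact hY.2.1 a ha (by simpa using h)
  have hYsub : Y ⊆ A ∩ B := by
    have h1 : Y ⊆ cl (A ∩ B) := by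
      have := hY.1; simpa using this
    intro y hy
    exact ⟨(hA ▸ hmono _ _ Set.inter_subset_left) (h1 hy),
           (hB ▸ hmono _ _ Set.inter_subset_right) (h1 hy)⟩
  have hZAsub : ZA ⊆ A := by
    have := hZA.1; rw [Set.union_empty] at this; exact hA ▸ this
  have hZBsub : ZB ⊆ B := by
    have := hZB.1; rw [Set.union_empty] at this; exact hB ▸ this
  have hAspan : A ⊆ cl ZA := by have := hZA.2.2; rwa [Set.union_empty] at this
  have hBspan : B ⊆ cl ZB := by have := hZB.2.2; rwa [Set.union_empty] at this
  -- extend Y inside ZA and ZB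
  obtain ⟨C, hCZA, hYCdisj, hYCind, hZAspan⟩ :=
    exists_extension hsub hmono hfin hexch ZA hYind
  obtain ⟨D, hDZB, hYDdisj, hYDind, hZBspan⟩ :=
    exists_extension hsub hmono hfin hexch ZB hYind
  -- cardinal bounds for Y∪C vs ZA
  have hYCcard : Cardinal.mk Y + Cardinal.mk C ≤ Cardinal.mk ZA := by
    rw [← Cardinal.mk_union_of_disjoint hYCdisj]
    refine mk_le_of_span hsub hmono hidem hfin hexch hYCind ?_
    rintro y (hy | hy)
    · exact hAspan (hYsub hy).1
    · exact hsub _ (hCZA hy)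
  have hYDcard : Cardinal.mk Y + Cardinal.mk D ≤ Cardinal.mk ZB := by
    rw [← Cardinal.mk_union_of_disjoint hYDdisj]
    refine mk_le_of_span hsub hmono hidem hfin hexch hYDind ?_
    rintro y (hy | hy)
    · exact hBspan (hYsub hy).2
    · exact hsub _ (hDZB hy)
  -- X is spanned by Y ∪ C ∪ D
  have hAcl : A ⊆ cl (Y ∪ C) :=
    hAspan.trans (cl_le_of_subset_cl hmono hidem hZAspan)
  have hBcl : B ⊆ cl (Y ∪ D) :=
    hBspan.trans (cl_le_of_subset_cl hmono hidem hZBspan)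
  have hXspan : X ⊆ cl ((Y ∪ C) ∪ D) := by
    have h1 : X ⊆ cl (A ∪ B) := by have := hX.1; rwa [Set.union_empty] at this
    refine h1.trans (cl_le_of_subset_cl hmono hidem ?_)
    rintro y (hy | hy)
    · exact hmono _ _ (by intro t ht; exact Or.inl ht) (hAcl hy)
    · refine hmono _ _ ?_ (hBcl hy)
      rintro t (ht | ht)
      · exact Or.inl (Or.inl ht)
      · exact Or.inr ht
  have hXcard : Cardinal.mk X ≤ Cardinal.mk Y + Cardinal.mk C + Cardinal.mk D := by
    calc Cardinal.mk X ≤ Cardinal.mk ((Y ∪ C) ∪ D : Set S) :=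
          mk_le_of_span hsub hmono hidem hfin hexch hXind hXspan
      _ ≤ Cardinal.mk (Y ∪ C : Set S) + Cardinal.mk D := Cardinal.mk_union_le _ _
      _ ≤ Cardinal.mk Y + Cardinal.mk C + Cardinal.mk D :=
          add_le_add_left (Cardinal.mk_union_le _ _) _
  calc Cardinal.mk X + Cardinal.mk Y
      ≤ (Cardinal.mk Y + Cardinal.mk C + Cardinal.mk D) + Cardinal.mk Y :=
        add_le_add_left hXcard _
    _ = (Cardinal.mk Y + Cardinal.mk C) + (Cardinal.mk Y + Cardinal.mk D) := by ring
    _ ≤ Cardinal.mk ZA + Cardinal.mk ZB := add_le_add hYCcard hYDcard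
end

section
/- Let cl be a closure operator, ⫫ a ternary relation, and ⫫ᴹ its monotonisation (A ⫫ᴹ_C B iff A ⫫_X B for all C ⊆ X ⊆ cl(B ∪ C)). If a relation ⫫⁰ is stronger than ⫫ (⫫⁰ implies ⫫) and ⫫⁰ satisfies right normality, right monotonicity, right closure (A ⫫⁰_C B implies A ⫫⁰_C cl(B ∪ C)), and right base monotonicity, then ⫫⁰ implies ⫫ᴹ. -/
/-- if `⫫⁰` is stronger than `⫫` and satisfies right normality,
right monotonicity, right closure and right base monotonicity, then `⫫⁰` is
stronger than the monotonisation `⫫ᴹ` of `⫫`. -/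
theorem stmt12 {S : Type*} (cl : Set S → Set S)
    (hsub : ∀ A : Set S, A ⊆ cl A)
    (hmono : ∀ A B : Set S, A ⊆ B → cl A ⊆ cl B)
    (hidem : ∀ A : Set S, cl (cl A) = cl A)
    (ind ind0 : Set S → Set S → Set S → Prop)
    (hstr : ∀ A C B : Set S, ind0 A C B → ind A C B)
    (hnor : ∀ A C B : Set S, ind0 A C B → ind0 A C (B ∪ C))
    (hmon : ∀ A C B D : Set S, ind0 A C (B ∪ D) → ind0 A C B)
    (hclo : ∀ A C B : Set S, ind0 A C B → ind0 A C (cl (B ∪ C)))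
    (hbmon : ∀ A C B D : Set S, C ⊆ B → B ⊆ D → ind0 A C D → ind0 A B D) :
    ∀ A C B : Set S, ind0 A C B →
      ∀ X : Set S, C ⊆ X → X ⊆ cl (B ∪ C) → ind A X B := by
  intro A C B h X hCX hXcl
  have h1 := hclo A C B h
  have h2 := hbmon A C X (cl (B ∪ C)) hCX hXcl h1
  have h3 : ind0 A X (B ∪ cl (B ∪ C)) := by
    have : B ∪ cl (B ∪ C) = cl (B ∪ C) := Set.union_eq_self_of_subset_left
      (fun x hx => hsub (B ∪ C) (Or.inl hx))
    rwa [this]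
  exact hstr A X B (hmon A X B _ h3)
end

section
/- Let (S, cl) be a pregeometry. Then the monotonisation of ⫫ᵃ equals ⫫^cl: for all A, B, C, one has (A ⫫ᵃ_X B for all X with C ⊆ X ⊆ cl(B ∪ C)) if and only if every finite subset of A independent over C remains independent over B ∪ C. -/
/-- Auxiliary: any finite set `H` with `d ∈ cl (↑H ∪ Y)` has a minimal subset with
the same property. -/
lemma exists_min_subset {S : Type*} [DecidableEq S] (cl : Set S → Set S) (Y : Set S) (d : S) :
    ∀ H : Finset S, d ∈ cl (↑H ∪ Y) →
      ∃ G, G ⊆ H ∧ d ∈ cl (↑G ∪ Y) ∧ ∀ g ∈ G, d ∉ cl (↑(G.erase g) ∪ Y) := by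
  intro H
  induction H using Finset.strongInductionOn with
  | _ H ih =>
    intro hd
    by_cases hmin : ∀ g ∈ H, d ∉ cl (↑(H.erase g) ∪ Y)
    · exact ⟨H, le_refl _, hd, hmin⟩
    · push_neg at hmin
      obtain ⟨g, hg, hdg⟩ := hmin
      obtain ⟨G, hGsub, h1, h2⟩ := ih (H.erase g) (Finset.erase_ssubset hg) hdg
      exact ⟨G, hGsub.trans (Finset.erase_subset _ _), h1, h2⟩

/-- in a pregeometry, the monotonisation of `⫫ᵃ` equals `⫫^cl`:
`A ⫫ᵃ_X B` holds for all `C ⊆ X ⊆ cl(B ∪ C)` iff every finite subset of `A`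
independent over `C` stays independent over `B ∪ C`. -/
theorem stmt13 {S : Type*} (cl : Set S → Set S)
    (hsub : ∀ A : Set S, A ⊆ cl A)
    (hmono : ∀ A B : Set S, A ⊆ B → cl A ⊆ cl B)
    (hidem : ∀ A : Set S, cl (cl A) = cl A)
    (hfin : ∀ (A : Set S) (x : S), x ∈ cl A → ∃ F : Finset S, ↑F ⊆ A ∧ x ∈ cl ↑F)
    (hexch : ∀ (A : Set S) (a b : S), a ∈ cl (A ∪ {b}) → a ∉ cl A → b ∈ cl (A ∪ {a})) :
    ∀ A B C : Set S,
      (∀ X : Set S, C ⊆ X → X ⊆ cl (B ∪ C) → cl (A ∪ X) ∩ cl (B ∪ X) = cl X) ↔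
      (∀ F : Finset S, ↑F ⊆ A → IndepOver cl C ↑F → IndepOver cl (B ∪ C) ↑F) := by
  classical
  intro A B C
  constructor
  · -- monotonised ⫫ᵃ implies ⫫^cl
    intro h F hFA hFC a haF hmem
    set G : Set S := ↑F \ {a} with hGdef
    have hmem' : a ∈ cl (B ∪ (C ∪ G)) := by
      have : B ∪ (C ∪ G) = (B ∪ C) ∪ G := by rw [Set.union_assoc]
      rw [this]; exact hmem
    obtain ⟨H, hH, haH⟩ := hfin _ a hmem'
    have haE0 : a ∈ cl (↑(H.filter (· ∈ B)) ∪ (C ∪ G)) := by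
      refine hmono _ _ ?_ haH
      intro x hx
      rcases hH hx with hxB | hxCG
      · exact Or.inl (Finset.mem_coe.mpr (Finset.mem_filter.mpr ⟨hx, hxB⟩))
      · exact Or.inr hxCG
    obtain ⟨E, hEsub, haE, hminE⟩ := exists_min_subset cl (C ∪ G) a _ haE0
    have hEB : ∀ x ∈ E, x ∈ B := fun x hx => (Finset.mem_filter.mp (hEsub hx)).2
    have hEne : E.Nonempty := by
      rcases E.eq_empty_or_nonempty with h0 | h
      · exfalso
        apply hFC a haF
        rw [h0] at haE
        simpa [hGdef] using haE
      · exact h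
    obtain ⟨e, he⟩ := hEne
    have hnot : a ∉ cl (↑(E.erase e) ∪ (C ∪ G)) := hminE e he
    have hstep : a ∈ cl ((↑(E.erase e) ∪ (C ∪ G)) ∪ {e}) := by
      refine hmono _ _ ?_ haE
      intro x hx
      rcases hx with hxE | hxCG
      · by_cases hxe : x = e
        · exact Or.inr (by simp [hxe])
        · exact Or.inl (Or.inl (Finset.mem_coe.mpr (Finset.mem_erase.mpr ⟨hxe, hxE⟩)))
      · exact Or.inl (Or.inr hxCG)
    have hexch' : e ∈ cl ((↑(E.erase e) ∪ (C ∪ G)) ∪ {a}) := hexch _ a e hstep hnot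
    set X : Set S := C ∪ ↑(E.erase e) with hXdef
    have hCX : C ⊆ X := Set.subset_union_left
    have hXcl : X ⊆ cl (B ∪ C) := by
      intro x hx
      rcases hx with hxC | hxE
      · exact hsub _ (Or.inr hxC)
      · exact hsub _ (Or.inl (hEB x (Finset.mem_of_mem_erase (Finset.mem_coe.mp hxE))))
    have heq := h X hCX hXcl
    have heA : e ∈ cl (A ∪ X) := by
      refine hmono _ _ ?_ hexch'
      intro x hx
      rcases hx with (hxE | (hxC | hxG)) | hxa
      · exact Or.inr (Or.inr hxE)
      · exact Or.inr (Or.inl hxC)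
      · exact Or.inl (hFA hxG.1)
      · exact Or.inl (hFA (by rw [Set.mem_singleton_iff.mp hxa]; exact haF))
    have heB : e ∈ cl (B ∪ X) := hsub _ (Or.inl (hEB e he))
    have heX : e ∈ cl X := heq ▸ ⟨heA, heB⟩
    apply hnot
    have hsubcl : (↑E : Set S) ∪ (C ∪ G) ⊆ cl (↑(E.erase e) ∪ (C ∪ G)) := by
      intro x hx
      rcases hx with hxE | hxCG
      · by_cases hxe : x = e
        · subst hxe
          refine hmono X _ ?_ heX
          intro y hy
          rcases hy with hyC | hyE
          · exact Or.inr (Or.inl hyC)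
          · exact Or.inl hyE
        · exact hsub _ (Or.inl (Finset.mem_coe.mpr (Finset.mem_erase.mpr ⟨hxe, hxE⟩)))
      · exact hsub _ (Or.inr hxCG)
    have := hmono _ _ hsubcl haE
    rwa [hidem] at this
  · -- ⫫^cl implies monotonised ⫫ᵃ
    intro h X hCX hXcl
    apply Set.Subset.antisymm
    · rintro d ⟨hdA, hdB⟩
      have hdBC : d ∈ cl (B ∪ C) := by
        have hsb : B ∪ X ⊆ cl (B ∪ C) := by
          intro x hx
          rcases hx with hxB | hxX
          · exact hsub _ (Or.inl hxB)
          · exact hXcl hxX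
        have := hmono _ _ hsb hdB
        rwa [hidem] at this
      obtain ⟨H, hH, hdH⟩ := hfin _ d hdA
      have hdH' : d ∈ cl (↑(H.filter (· ∉ X)) ∪ X) := by
        refine hmono _ _ ?_ hdH
        intro x hx
        by_cases hxX : x ∈ X
        · exact Or.inr hxX
        · exact Or.inl (Finset.mem_coe.mpr (Finset.mem_filter.mpr ⟨hx, hxX⟩))
      obtain ⟨G, hGsub, hdG, hminG⟩ := exists_min_subset cl X d _ hdH'
      have hGA : (↑G : Set S) ⊆ A := by
        intro x hx
        have hxH := Finset.mem_filter.mp (hGsub hx)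
        rcases hH hxH.1 with hxA | hxX
        · exact hxA
        · exact absurd hxX hxH.2
      have hGindX : IndepOver cl X ↑G := by
        intro g hg hgcl
        apply hminG g (Finset.mem_coe.mp hg)
        have hs : (↑G : Set S) ∪ X ⊆ cl (↑(G.erase g) ∪ X) := by
          intro x hx
          rcases hx with hxG | hxX
          · by_cases hxg : x = g
            · subst hxg
              refine hmono _ _ ?_ hgcl
              intro y hy
              rcases hy with hyX | hyG
              · exact Or.inr hyX
              · exact Or.inl (by rw [Finset.coe_erase]; exact hyG)
            · exact hsub _ (Or.inl (Finset.mem_coe.mpr (Finset.mem_erase.mpr ⟨hxg, hxG⟩)))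
          · exact hsub _ (Or.inr hxX)
        have := hmono _ _ hs hdG
        rwa [hidem] at this
      have hGindC : IndepOver cl C ↑G := by
        intro g hg hgc
        apply hGindX g hg
        refine hmono _ _ ?_ hgc
        intro y hy
        rcases hy with hyC | hyG
        · exact Or.inl (hCX hyC)
        · exact Or.inr hyG
      have hGindBC := h G hGA hGindC
      rcases G.eq_empty_or_nonempty with h0 | ⟨g, hg⟩
      · rw [h0] at hdG
        simpa using hdG
      · exfalso
        have h1 : d ∉ cl (↑(G.erase g) ∪ X) := hminG g hg
        have h2 : d ∈ cl ((↑(G.erase g) ∪ X) ∪ {g}) := by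
          refine hmono _ _ ?_ hdG
          intro x hx
          rcases hx with hxG | hxX
          · by_cases hxg : x = g
            · exact Or.inr (by simp [hxg])
            · exact Or.inl (Or.inl (Finset.mem_coe.mpr (Finset.mem_erase.mpr ⟨hxg, hxG⟩)))
          · exact Or.inl (Or.inr hxX)
        have h3 : g ∈ cl ((↑(G.erase g) ∪ X) ∪ {d}) := hexch _ d g h2 h1
        apply hGindBC g (Finset.mem_coe.mpr hg)
        have hsb : (↑(G.erase g) ∪ X) ∪ {d} ⊆ cl ((B ∪ C) ∪ ((↑G : Set S) \ {g})) := by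
          intro x hx
          rcases hx with hxG | hxd
          · rcases hxG with hxG | hxX
            · refine hsub _ (Or.inr ?_)
              rw [← Finset.coe_erase]; exact hxG
            · exact hmono _ _ Set.subset_union_left (hXcl hxX)
          · rw [Set.mem_singleton_iff.mp hxd]
            exact hmono _ _ Set.subset_union_left hdBC
        have := hmono _ _ hsb h3
        rwa [hidem] at this
    · intro d hd
      exact ⟨hmono _ _ Set.subset_union_right hd, hmono _ _ Set.subset_union_right hd⟩
end

section
/- In a vector space V over a field K, with cl(A) the linear span of A, the relation A ⫫ᵃ_C B (span(A ∪ C) ∩ span(B ∪ C) = span(C)) coincides with A ⫫^cl_C B (every finite subset of A linearly independent over C remains linearly independent over B ∪ C); i.e., the span pregeometry is modular. -/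
/-- in a vector space with `cl` the linear span, `⫫ᵃ` coincides with
`⫫^cl`: the span pregeometry is modular. -/
theorem stmt15 {K V : Type*} [Field K] [AddCommGroup V] [Module K V]
    (cl : Set V → Set V) (cl_def : ∀ A : Set V, cl A = ↑(Submodule.span K A)) :
    ∀ A B C : Set V,
      (cl (A ∪ C) ∩ cl (B ∪ C) = cl C) ↔
      (∀ F : Finset V, ↑F ⊆ A → IndepOver cl C ↑F → IndepOver cl (B ∪ C) ↑F) := by
  intro A B C
  constructor
  · intro h F hFA hF a haF hmem
    apply hF a haF
    rw [cl_def] at hmem ⊢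
    rw [Submodule.span_union] at hmem
    obtain ⟨b, hb, w, hw, hbw⟩ := Submodule.mem_sup.mp hmem
    have hwA : w ∈ Submodule.span K (A ∪ C) := by
      refine Submodule.span_mono ?_ hw
      intro x hx
      exact Or.inl (hFA hx.1)
    have haA : a ∈ Submodule.span K (A ∪ C) :=
      Submodule.subset_span (Or.inl (hFA haF))
    have hbAC : b ∈ Submodule.span K (A ∪ C) := by
      have hb_eq : b = a - w := by rw [← hbw]; abel
      rw [hb_eq]; exact Submodule.sub_mem _ haA hwA
    have hbC : b ∈ Submodule.span K C := by
      have : b ∈ cl (A ∪ C) ∩ cl (B ∪ C) := by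
        rw [cl_def, cl_def]; exact ⟨hbAC, hb⟩
      rw [h, cl_def] at this
      exact this
    rw [Submodule.span_union]
    exact Submodule.mem_sup.mpr ⟨b, hbC, w, hw, hbw⟩
  · intro h
    ext v
    simp only [cl_def, SetLike.mem_coe, Set.mem_inter_iff]
    constructor
    swap
    · intro hv
      exact ⟨Submodule.span_mono Set.subset_union_right hv,
             Submodule.span_mono Set.subset_union_right hv⟩
    rintro ⟨hvA, hvB⟩
    classical
    -- key induction
    have key : ∀ n (F : Finset V), F.card ≤ n → ↑F ⊆ A →
        v ∈ Submodule.span K (C ∪ ↑F) → v ∈ Submodule.span K C := by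
      intro n
      induction n with
      | zero =>
        intro F hcard _ hv
        rw [Nat.le_zero, Finset.card_eq_zero] at hcard
        subst hcard
        simpa using hv
      | succ n ih =>
        intro F hcard hFA hv
        by_cases hdep : ∃ a ∈ F, a ∈ Submodule.span K (C ∪ (↑F \ {a}))
        · obtain ⟨a, haF, ha⟩ := hdep
          refine ih (F.erase a) ?_ ?_ ?_
          · have := Finset.card_erase_lt_of_mem haF
            omega
          · intro x hx; exact hFA (Finset.mem_of_mem_erase hx)
          · have hsub : (C ∪ ↑F : Set V) ⊆ Submodule.span K (C ∪ ↑(F.erase a)) := by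
              rw [Finset.coe_erase]
              rintro x (hx | hx)
              · exact Submodule.subset_span (Or.inl hx)
              · by_cases hxa : x = a
                · subst hxa; exact ha
                · exact Submodule.subset_span (Or.inr ⟨hx, hxa⟩)
            exact Submodule.span_le.mpr hsub hv
        · push_neg at hdep
          have hindep : IndepOver cl C ↑F := by
            intro a haF hmem
            rw [cl_def] at hmem
            exact hdep a haF hmem
          have hB := h F hFA hindep
          rw [Submodule.span_union] at hv
          obtain ⟨c, hc, w, hw, hcw⟩ := Submodule.mem_sup.mp hv
          rw [Submodule.mem_span_finset] at hw
          obtain ⟨f, -, hf⟩ := hw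
          have hzero : ∀ a ∈ F, f a = 0 := by
            intro a haF
            by_contra hfa
            apply hB a (by exact_mod_cast haF)
            rw [cl_def]
            show a ∈ Submodule.span K ((B ∪ C) ∪ (↑F \ {a}))
            have hsum : f a • a + ∑ x ∈ F.erase a, f x • x = w := by
              rw [Finset.add_sum_erase F (fun x => f x • x) haF]; exact hf
            have ha_eq : a = (f a)⁻¹ • (v - c - ∑ x ∈ F.erase a, f x • x) := by
              have : v - c - ∑ x ∈ F.erase a, f x • x = f a • a := by
                have hwvc : w = v - c := by rw [← hcw]; abel
                rw [← hsum] at hwvc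
                rw [← hwvc]; abel
              rw [this, smul_smul, inv_mul_cancel₀ hfa, one_smul]
            set P := Submodule.span K ((B ∪ C) ∪ (↑F \ {a})) with hP
            have hvP : v ∈ P := Submodule.span_mono Set.subset_union_left hvB
            have hcP : c ∈ P := by
              refine Submodule.span_mono ?_ hc
              intro x hx; exact Or.inl (Or.inr hx)
            have hsP : (∑ x ∈ F.erase a, f x • x) ∈ P := by
              refine Submodule.sum_mem _ ?_
              intro x hx
              refine Submodule.smul_mem _ _ (Submodule.subset_span ?_)
              exact Or.inr ⟨Finset.mem_of_mem_erase hx,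
                Finset.ne_of_mem_erase hx⟩
            have hfin : (f a)⁻¹ • (v - c - ∑ x ∈ F.erase a, f x • x) ∈ P :=
              Submodule.smul_mem _ _ (Submodule.sub_mem _ (Submodule.sub_mem _ hvP hcP) hsP)
            rw [← ha_eq] at hfin
            exact hfin
          have hw0 : w = 0 := by
            rw [← hf]
            apply Finset.sum_eq_zero
            intro x hx
            rw [hzero x hx, zero_smul]
          rw [hw0, add_zero] at hcw
          rw [← hcw]; exact hc
    rw [Submodule.span_union] at hvA
    obtain ⟨wa, hwa, wc, hwc, hwac⟩ := Submodule.mem_sup.mp hvA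
    obtain ⟨F, hFA, hwF⟩ := Submodule.mem_span_finite_of_mem_span hwa
    refine key F.card F le_rfl hFA ?_
    rw [Submodule.span_union]
    exact Submodule.mem_sup.mpr ⟨wc, hwc, wa, hwF, by rw [← hwac]; abel⟩
end

section
/- Let (S, cl) be a pregeometry. Then the monotonisation of ⫫ᵃ with respect to cl equals its naive monotonisation: for all A, B, C, (A ⫫ᵃ_X B for all X with C ⊆ X ⊆ cl(B ∪ C)) if and only if (A ⫫ᵃ_D B for all D with C ⊆ D ⊆ B ∪ C). -/
set_option maxHeartbeats 1000000 in
/-- in a pregeometry, the monotonisation of `⫫ᵃ` with respect to `cl`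
equals its naive monotonisation (with respect to the trivial closure operator). -/
theorem stmt16 {S : Type*} (cl : Set S → Set S)
    (hsub : ∀ A : Set S, A ⊆ cl A)
    (hmono : ∀ A B : Set S, A ⊆ B → cl A ⊆ cl B)
    (hidem : ∀ A : Set S, cl (cl A) = cl A)
    (hfin : ∀ (A : Set S) (x : S), x ∈ cl A → ∃ F : Finset S, ↑F ⊆ A ∧ x ∈ cl ↑F)
    (hexch : ∀ (A : Set S) (a b : S), a ∈ cl (A ∪ {b}) → a ∉ cl A → b ∈ cl (A ∪ {a})) :
    ∀ A B C : Set S,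
      (∀ X : Set S, C ⊆ X → X ⊆ cl (B ∪ C) → cl (A ∪ X) ∩ cl (B ∪ X) = cl X) ↔
      (∀ D : Set S, C ⊆ D → D ⊆ B ∪ C → cl (A ∪ D) ∩ cl (B ∪ D) = cl D) := by
  classical
  have clcl : ∀ {P Q : Set S}, P ⊆ cl Q → cl P ⊆ cl Q := by
    intro P Q hPQ
    have := hmono P (cl Q) hPQ
    rwa [hidem] at this
  intro A B C
  constructor
  · intro h D hCD hDBC
    exact h D hCD (hDBC.trans (hsub _))
  · intro h
    -- Case A : if G ⊆ B ∪ C, the hypothesis applies directly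
    have caseA : ∀ (x : S) (G : Finset S), ↑G ⊆ B ∪ C → x ∈ cl (B ∪ C) →
        x ∈ cl (A ∪ C ∪ ↑G) → x ∈ cl (C ∪ ↑G) := by
      intro x G hGB hxK hxcl
      have hsub1 : C ∪ ↑G ⊆ B ∪ C := by
        intro y hy
        rcases hy with hy | hy
        · exact Or.inr hy
        · exact hGB hy
      have hD := h (C ∪ ↑G) Set.subset_union_left hsub1
      rw [← hD]
      refine ⟨?_, ?_⟩
      · rwa [Set.union_assoc] at hxcl
      · refine hmono (B ∪ C) (B ∪ (C ∪ ↑G)) ?_ hxK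
        intro y hy
        simp only [Set.mem_union] at hy ⊢
        tauto
    -- Key lemma, by induction on the number of elements not in B ∪ C
    have key : ∀ n : ℕ, ∀ (x : S) (G : Finset S), ↑G ⊆ cl (B ∪ C) → x ∈ cl (B ∪ C) →
        x ∈ cl (A ∪ C ∪ ↑G) →
        (Finset.filter (fun z => z ∉ B ∪ C) (insert x G)).card ≤ n →
        x ∈ cl (C ∪ ↑G) := by
      intro n
      induction n with
      | zero =>
        intro x G hGK hxK hxcl hcard
        have hGB : (↑G : Set S) ⊆ B ∪ C := by
          intro z hz
          by_contra hzB
          have hzmem : z ∈ Finset.filter (fun z => z ∉ B ∪ C) (insert x G) := by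
            simp only [Finset.mem_filter, Finset.mem_insert]
            exact ⟨Or.inr hz, hzB⟩
          have := Finset.card_pos.mpr ⟨z, hzmem⟩
          omega
        exact caseA x G hGB hxK hxcl
      | succ n ih =>
        intro x G hGK hxK hxcl hcard
        by_cases hGB : (↑G : Set S) ⊆ B ∪ C
        · exact caseA x G hGB hxK hxcl
        · obtain ⟨g, hgG, hgB⟩ := Set.not_subset.mp hGB
          have hgGf : g ∈ G := hgG
          by_contra hx
          have hgx : g ≠ x := by
            intro e
            exact hx (hsub _ (Or.inr (by rwa [← e])))
          set G' := G.erase g with hG'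
          have hG'sub : (↑G' : Set S) ⊆ ↑G := by
            intro z hz
            exact Finset.mem_coe.mpr (Finset.mem_of_mem_erase (Finset.mem_coe.mp hz))
          have hGins : (↑G : Set S) = insert g ↑G' := by
            rw [← Finset.coe_insert, Finset.insert_erase hgGf]
          have hgmem : g ∈ Finset.filter (fun z => z ∉ B ∪ C) (insert x G) := by
            simp only [Finset.mem_filter, Finset.mem_insert]
            exact ⟨Or.inr hgGf, hgB⟩
          have hcard0 := Finset.card_erase_of_mem hgmem
          have hcardle := hcard
          by_cases hxG' : x ∈ cl (A ∪ C ∪ ↑G')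
          · -- drop g and use the induction hypothesis
            have hcard' : (Finset.filter (fun z => z ∉ B ∪ C) (insert x G')).card ≤ n := by
              have hsubf : Finset.filter (fun z => z ∉ B ∪ C) (insert x G') ⊆
                  (Finset.filter (fun z => z ∉ B ∪ C) (insert x G)).erase g := by
                intro z hz
                simp only [Finset.mem_filter, Finset.mem_insert] at hz
                have hzg : z ≠ g := by
                  intro e
                  rcases hz.1 with h1 | h1
                  · exact hgx (by rw [← e, h1])
                  · exact Finset.notMem_erase g G (by rwa [e] at h1)
                refine Finset.mem_erase.mpr ⟨hzg, ?_⟩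
                simp only [Finset.mem_filter, Finset.mem_insert]
                exact ⟨hz.1.imp id (fun hh => Finset.mem_of_mem_erase hh), hz.2⟩
              have hcc := Finset.card_le_card hsubf
              rw [hcard0] at hcc
              omega
            have hres := ih x G' (hG'sub.trans hGK) hxK hxG' hcard'
            apply hx
            refine hmono _ _ ?_ hres
            intro y hy
            rcases hy with hy | hy
            · exact Or.inl hy
            · exact Or.inr (hG'sub hy)
          · -- exchange case
            have hxg : x ∈ cl ((A ∪ C ∪ ↑G') ∪ {g}) := by
              refine hmono _ _ ?_ hxcl
              rw [hGins]
              intro y hy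
              simp only [Set.mem_union, Set.mem_insert_iff, Set.mem_singleton_iff] at hy ⊢
              tauto
            have hgcl : g ∈ cl ((A ∪ C ∪ ↑G') ∪ {x}) := hexch _ x g hxg hxG'
            have hgG'cl : g ∉ cl (C ∪ ↑G') := by
              intro hgin
              apply hxG'
              refine clcl ?_ hxcl
              rw [hGins]
              intro y hy
              rcases hy with (hy | hy) | hy
              · exact hsub _ (Or.inl (Or.inl hy))
              · exact hsub _ (Or.inl (Or.inr hy))
              · rcases hy with hy | hy
                · subst hy
                  refine hmono (C ∪ ↑G') _ ?_ hgin
                  intro z hz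
                  rcases hz with hz | hz
                  · exact Or.inl (Or.inr hz)
                  · exact Or.inr hz
                · exact hsub _ (Or.inr hy)
            have hgY : g ∉ cl (C ∪ ↑G' ∪ {x}) := by
              intro hg
              have hxgg := hexch (C ∪ ↑G') g x hg hgG'cl
              apply hx
              refine clcl ?_ hxgg
              rw [hGins]
              intro y hy
              simp only [Set.mem_union, Set.mem_insert_iff, Set.mem_singleton_iff] at hy
              rcases hy with (hy | hy) | hy
              · exact hsub _ (Or.inl hy)
              · exact hsub _ (Or.inr (Or.inr hy))
              · subst hy
                exact hsub _ (Or.inr (Or.inl rfl))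
            -- get a finite subset of B ∪ C spanning g
            obtain ⟨F₁, hF₁B, hgF₁⟩ := hfin (B ∪ C) g (hGK hgG)
            set Y : Set S := C ∪ ↑G' ∪ {x} with hYdef
            -- choose a minimal F₀ ⊆ F₁ with g ∈ cl (Y ∪ F₀)
            have hne : (Finset.filter (fun F : Finset S => g ∈ cl (Y ∪ (↑F : Set S))) F₁.powerset).Nonempty := by
              refine ⟨F₁, ?_⟩
              simp only [Finset.mem_filter, Finset.mem_powerset]
              exact ⟨Finset.Subset.refl _, hmono _ _ Set.subset_union_right hgF₁⟩
            obtain ⟨F₀, hF₀mem, hF₀min⟩ :=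
              Finset.exists_min_image (Finset.filter (fun F : Finset S => g ∈ cl (Y ∪ (↑F : Set S))) F₁.powerset)
                Finset.card hne
            simp only [Finset.mem_filter, Finset.mem_powerset] at hF₀mem
            obtain ⟨hF₀F₁, hgF₀⟩ := hF₀mem
            have hF₀ne : F₀.Nonempty := by
              rcases Finset.eq_empty_or_nonempty F₀ with he | hne'
              · exfalso
                apply hgY
                rw [he] at hgF₀
                simpa using hgF₀
              · exact hne'
            obtain ⟨f, hfF₀⟩ := hF₀ne
            have hfBC : f ∈ B ∪ C := hF₁B (hF₀F₁ hfF₀)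
            have hminf : g ∉ cl (Y ∪ ↑(F₀.erase f)) := by
              intro hgin
              have hmem : F₀.erase f ∈ Finset.filter (fun F : Finset S => g ∈ cl (Y ∪ (↑F : Set S))) F₁.powerset := by
                simp only [Finset.mem_filter, Finset.mem_powerset]
                exact ⟨(Finset.erase_subset f F₀).trans hF₀F₁, hgin⟩
              have := hF₀min _ hmem
              have hlt := Finset.card_erase_of_mem hfF₀
              have hpos := Finset.card_pos.mpr ⟨f, hfF₀⟩
              omega
            have hgF₀' : g ∈ cl ((Y ∪ ↑(F₀.erase f)) ∪ {f}) := by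
              refine hmono _ _ ?_ hgF₀
              intro y hy
              rcases hy with hy | hy
              · exact Or.inl (Or.inl hy)
              · by_cases hyf : y = f
                · exact Or.inr hyf
                · exact Or.inl (Or.inr (Finset.mem_coe.mpr
                    (Finset.mem_erase.mpr ⟨hyf, Finset.mem_coe.mp hy⟩)))
            have hfcl : f ∈ cl ((Y ∪ ↑(F₀.erase f)) ∪ {g}) :=
              hexch (Y ∪ ↑(F₀.erase f)) g f hgF₀' hminf
            -- the new finite set
            set Gs : Finset S := insert x (G' ∪ F₀.erase f) with hGsdef
            have hGscoe : (↑Gs : Set S) = insert x (↑G' ∪ ↑(F₀.erase f)) := by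
              simp [hGsdef]
            have hfA : f ∈ cl (A ∪ C ∪ ↑Gs) := by
              refine clcl ?_ hfcl
              intro y hy
              rcases hy with hy | hy
              · -- y ∈ Y ∪ erase
                apply hsub
                rw [hGscoe]
                rcases hy with hy | hy
                · rcases hy with hy | hy
                  · rcases hy with hy | hy
                    · exact Or.inl (Or.inr hy)
                    · exact Or.inr (Or.inr (Or.inl hy))
                  · exact Or.inr (Or.inl hy)
                · exact Or.inr (Or.inr (Or.inr hy))
              · -- y = g
                rcases hy with rfl
                refine hmono _ _ ?_ hgcl
                rw [hGscoe]
                intro z hz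
                simp only [Set.mem_union, Set.mem_insert_iff, Set.mem_singleton_iff] at hz ⊢
                tauto
            have hfK : f ∈ cl (B ∪ C) := hsub _ hfBC
            have hGsK : (↑Gs : Set S) ⊆ cl (B ∪ C) := by
              rw [hGscoe]
              intro z hz
              simp only [Set.mem_insert_iff, Set.mem_union] at hz
              rcases hz with rfl | hz | hz
              · exact hxK
              · exact hGK (hG'sub hz)
              · exact hsub _ (hF₁B (hF₀F₁ (Finset.mem_of_mem_erase (Finset.mem_coe.mp hz))))
            -- measure decreased
            have hcard' : (Finset.filter (fun z => z ∉ B ∪ C) (insert f Gs)).card ≤ n := by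
              have hsubf : Finset.filter (fun z => z ∉ B ∪ C) (insert f Gs) ⊆
                  (Finset.filter (fun z => z ∉ B ∪ C) (insert x G)).erase g := by
                intro z hz
                simp only [Finset.mem_filter, Finset.mem_insert, hGsdef,
                  Finset.mem_union] at hz
                obtain ⟨hz1, hz2⟩ := hz
                have hzf : z ≠ f := by
                  rintro rfl
                  exact hz2 hfBC
                have hzmem : z = x ∨ z ∈ G' := by
                  rcases hz1 with rfl | rfl | hz1 | hz1
                  · exact absurd rfl hzf
                  · exact Or.inl rfl
                  · exact Or.inr hz1
                  · exact absurd (hF₁B (hF₀F₁ (Finset.mem_of_mem_erase hz1))) hz2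
                have hzg : z ≠ g := by
                  intro e
                  rcases hzmem with h1 | h1
                  · exact hgx (by rw [← e, h1])
                  · exact Finset.notMem_erase g G (by rwa [e] at h1)
                refine Finset.mem_erase.mpr ⟨hzg, ?_⟩
                simp only [Finset.mem_filter, Finset.mem_insert]
                exact ⟨hzmem.imp id (fun hh => Finset.mem_of_mem_erase hh), hz2⟩
              have hcc := Finset.card_le_card hsubf
              rw [hcard0] at hcc
              omega
            have hres := ih f Gs hGsK hfK hfA hcard'
            -- contradiction with minimality of F₀
            apply hminf
            have hfY : f ∈ cl (Y ∪ ↑(F₀.erase f)) := by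
              refine hmono _ _ ?_ hres
              rw [hGscoe]
              intro z hz
              simp only [hYdef, Set.mem_union, Set.mem_insert_iff, Set.mem_singleton_iff] at hz ⊢
              tauto
            refine clcl ?_ hgF₀
            intro y hy
            rcases hy with hy | hy
            · exact hsub _ (Or.inl hy)
            · by_cases hyf : y = f
              · rwa [hyf]
              · exact hsub _ (Or.inr (Finset.mem_coe.mpr
                  (Finset.mem_erase.mpr ⟨hyf, Finset.mem_coe.mp hy⟩)))
    -- main argument
    intro X hCX hXK
    have hBX : cl (B ∪ X) = cl (B ∪ C) := by
      apply le_antisymm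
      · refine clcl ?_
        intro y hy
        rcases hy with hy | hy
        · exact hsub _ (Or.inl hy)
        · exact hXK hy
      · refine hmono _ _ ?_
        intro y hy
        rcases hy with hy | hy
        · exact Or.inl hy
        · exact Or.inr (hCX hy)
    apply le_antisymm
    · intro x hxmem
      obtain ⟨hx1, hx2⟩ := hxmem
      rw [hBX] at hx2
      obtain ⟨F₂, hF₂sub, hxF₂⟩ := hfin (A ∪ X) x hx1
      set G : Finset S := F₂.filter (fun z => z ∈ X) with hGdef
      have hGX : (↑G : Set S) ⊆ X := by
        intro z hz
        simp only [hGdef, Finset.coe_filter, Set.mem_setOf_eq] at hz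
        exact hz.2
      have hxG : x ∈ cl (A ∪ C ∪ ↑G) := by
        refine hmono _ _ ?_ hxF₂
        intro y hy
        by_cases hyX : y ∈ X
        · refine Or.inr ?_
          simp only [hGdef, Finset.coe_filter, Set.mem_setOf_eq]
          exact ⟨hy, hyX⟩
        · rcases hF₂sub hy with hyA | hyX'
          · exact Or.inl (Or.inl hyA)
          · exact absurd hyX' hyX
      have hres := key _ x G (hGX.trans hXK) hx2 hxG le_rfl
      refine hmono _ _ ?_ hres
      intro y hy
      rcases hy with hy | hy
      · exact hCX hy
      · exact hGX hy
    · intro x hx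
      exact ⟨hmono _ _ Set.subset_union_right hx,
             hmono _ _ Set.subset_union_right hx⟩
end
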